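/- arXiv:2010.10464 — 2 statements merged into one kernel-verified Lean document; each statement's English description precedes it below -/
import Mathlib

section
/- Assume ε ≥ 1, 𝓚 is nonempty, |X_k| = Z for every k ∈ 𝓚 with Z ≥ 2ε + 1, and every subfile index f ∈ 𝓕 belongs to X_k for at least one k ∈ 𝓚. Then ℓ*(X,ε) ≥ 2ε, with equality if and only if Z = F. -/
open Matrix Finset

/-- `H` is a valid encoder for the `(X, ε)` cache update problem: for every node `k`
there is a decoder `D_k` recovering `(w+e)|_{X_k}` from the codeword `H(w+e)` and the
side information `w|_{X_k}`, for all `w` and all updates `e` of Hamming weight at most `ε`. -/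
def ValidEncoder {𝓕 𝓚 : Type} [Fintype 𝓕] (F : Type) [Field F] [Fintype F]
    (X : 𝓚 → Finset 𝓕) (ε : ℕ) {l : ℕ} (H : Matrix (Fin l) 𝓕 F) : Prop :=
  ∀ k : 𝓚, ∃ D : (Fin l → F) → ({f // f ∈ X k} → F) → ({f // f ∈ X k} → F),
    ∀ w e : 𝓕 → F, {f | e f ≠ 0}.ncard ≤ ε →
      D (H.mulVec (w + e)) (fun f => w f.1) = fun f => (w + e) f.1

/-- The optimal codelength `ℓ*(X, ε)`: the least `l` for which some finite field `F`
admits a valid encoder `H ∈ F^{l×F}` for the `(X, ε)` cache update problem. -/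
noncomputable def optLen {𝓕 𝓚 : Type} [Fintype 𝓕] (X : 𝓚 → Finset 𝓕) (ε : ℕ) : ℕ :=
  sInf {l : ℕ | ∃ (F : Type) (inst1 : Field F) (inst2 : Fintype F)
    (H : Matrix (Fin l) 𝓕 F), @ValidEncoder 𝓕 𝓚 _ F inst1 inst2 X ε l H}

/-- Basic separation property of a valid encoder: if two (message, error) pairs agree on
the side information and have equal syndromes, then the errors agree on `X k`. -/
lemma valid_sep {𝓕 𝓚 : Type} [Fintype 𝓕] {F : Type} [Field F] [Fintype F]
    {X : 𝓚 → Finset 𝓕} {ε : ℕ} {l : ℕ} {H : Matrix (Fin l) 𝓕 F}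
    (hH : ValidEncoder F X ε H) (k : 𝓚) {w w' e e' : 𝓕 → F}
    (he : {f | e f ≠ 0}.ncard ≤ ε) (he' : {f | e' f ≠ 0}.ncard ≤ ε)
    (hw : ∀ f ∈ X k, w f = w' f)
    (hsyn : H.mulVec (w + e) = H.mulVec (w' + e')) :
    ∀ f ∈ X k, e f = e' f := by
  obtain ⟨D, hD⟩ := hH k
  have h1 := hD w e he
  have h2 := hD w' e' he'
  intro f hf
  have hwk : (fun f : {f // f ∈ X k} => w f.1) = fun f => w' f.1 :=
    funext fun f => hw f.1 f.2
  have key : (fun f : {f // f ∈ X k} => (w + e) f.1) = fun f => (w' + e') f.1 := by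
    rw [← h1, ← h2, hsyn, hwk]
  have := congrFun key ⟨f, hf⟩
  simp only [Pi.add_apply] at this
  have hwf := hw f hf
  linear_combination this - hwf

/-- The submodule of vectors vanishing on `X k`. -/
def offSub {𝓕 𝓚 : Type} (F : Type) [Field F] (X : 𝓚 → Finset 𝓕) (k : 𝓚) :
    Submodule F (𝓕 → F) where
  carrier := {v | ∀ f ∈ X k, v f = 0}
  add_mem' := by intro a b ha hb f hf; simp [ha f hf, hb f hf]
  zero_mem' := by intro f hf; rfl
  smul_mem' := by intro c a ha f hf; simp [ha f hf]

/-- Dimension lower bound for a valid encoder: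
`2ε + dim (H · offSub) ≤ l`. -/
lemma valid_lower {𝓕 𝓚 : Type} [Fintype 𝓕] {F : Type} [Field F] [Fintype F]
    {X : 𝓚 → Finset 𝓕} {ε : ℕ} {l : ℕ} {H : Matrix (Fin l) 𝓕 F}
    (hH : ValidEncoder F X ε H) (k : 𝓚) (hcard : 2 * ε ≤ (X k).card) :
    2 * ε + Module.finrank F ↥((offSub F X k).map H.mulVecLin) ≤ l := by
  classical
  obtain ⟨S, hSsub, hScard⟩ := Finset.exists_subset_card_eq hcard
  obtain ⟨S1, hS1sub, hS1card⟩ := Finset.exists_subset_card_eq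
    (show ε ≤ S.card by omega)
  set S2 : Finset 𝓕 := S \ S1 with hS2
  have hS2card : S2.card = ε := by
    rw [hS2, Finset.card_sdiff_of_subset hS1sub, hScard, hS1card]; omega
  set W := (offSub F X k).map H.mulVecLin with hW
  -- the extension-by-zero linear map
  set ext : ({f // f ∈ S} → F) →ₗ[F] (𝓕 → F) :=
    { toFun := fun v f => if h : f ∈ S then v ⟨f, h⟩ else 0
      map_add' := by intro a b; funext f; by_cases h : f ∈ S <;> simp [h]
      map_smul' := by intro c a; funext f; by_cases h : f ∈ S <;> simp [h] } with hext
  set φ : ({f // f ∈ S} → F) →ₗ[F] ((Fin l → F) ⧸ W) :=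
    W.mkQ ∘ₗ H.mulVecLin ∘ₗ ext with hφ
  have hinj : Function.Injective φ := by
    rw [← LinearMap.ker_eq_bot]
    rw [LinearMap.ker_eq_bot']
    intro v hv
    have hmem : H.mulVecLin (ext v) ∈ W := by
      have : W.mkQ (H.mulVecLin (ext v)) = 0 := hv
      rwa [Submodule.mkQ_apply, Submodule.Quotient.mk_eq_zero] at this
    obtain ⟨d, hd, hdv⟩ := Submodule.mem_map.mp hmem
    set vv : 𝓕 → F := ext v with hvv
    set e : 𝓕 → F := fun f => if f ∈ S1 then vv f else 0 with he
    set e' : 𝓕 → F := fun f => if f ∈ S2 then -(vv f) else 0 with he'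
    have hvve : ∀ f, vv f = e f - e' f := by
      intro f
      by_cases h1 : f ∈ S1
      · have h2 : f ∉ S2 := by simp [hS2, h1]
        simp [he, he', h1, h2]
      · by_cases hs : f ∈ S
        · have h2 : f ∈ S2 := by simp [hS2, hs, h1]
          simp [he, he', h1, h2]
        · have h2 : f ∉ S2 := by simp [hS2, hs]
          have : vv f = 0 := by simp [hvv, hext, hs]
          simp [he, he', h1, h2, this]
    have hwe : {f | e f ≠ 0}.ncard ≤ ε := by
      have hsub : {f | e f ≠ 0} ⊆ ↑S1 := by
        intro f hf
        by_contra h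
        have h' : f ∉ S1 := by simpa using h
        exact hf (by simp [he, h'])
      calc {f | e f ≠ 0}.ncard ≤ (↑S1 : Set 𝓕).ncard :=
            Set.ncard_le_ncard hsub (S1.finite_toSet)
        _ = ε := by rw [Set.ncard_coe_finset, hS1card]
    have hwe' : {f | e' f ≠ 0}.ncard ≤ ε := by
      have hsub : {f | e' f ≠ 0} ⊆ ↑S2 := by
        intro f hf
        by_contra h
        have h' : f ∉ S2 := by simpa using h
        exact hf (by simp [he', h'])
      calc {f | e' f ≠ 0}.ncard ≤ (↑S2 : Set 𝓕).ncard :=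
            Set.ncard_le_ncard hsub (S2.finite_toSet)
        _ = ε := by rw [Set.ncard_coe_finset, hS2card]
    have hwzero : ∀ f ∈ X k, (-d) f = (0 : 𝓕 → F) f := by
      intro f hf; simp [hd f hf]
    have hsyn : H.mulVec (-d + e) = H.mulVec ((0 : 𝓕 → F) + e') := by
      have h0 : H.mulVec (vv - d) = 0 := by
        have : H.mulVecLin (vv - d) = 0 := by
          rw [map_sub, hdv, sub_self]
        simpa [Matrix.mulVecLin_apply] using this
      have hdecomp : -d + e = ((0 : 𝓕 → F) + e') + (vv - d) := by
        funext f
        simp only [Pi.add_apply, Pi.neg_apply, Pi.sub_apply, Pi.zero_apply]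
        rw [hvve f]; ring
      rw [hdecomp, Matrix.mulVec_add, h0, add_zero]
    have key := valid_sep hH k hwe hwe' hwzero hsyn
    funext f
    have hfS : f.1 ∈ S := f.2
    have hfX : f.1 ∈ X k := hSsub hfS
    have := key f.1 hfX
    have hvvf : vv f.1 = 0 := by
      by_cases h1 : f.1 ∈ S1
      · have h2 : f.1 ∉ S2 := by simp [hS2, h1]
        simp [he, he', h1, h2] at this
        exact this
      · have h2 : f.1 ∈ S2 := by simp [hS2, hfS, h1]
        simp [he, he', h1, h2] at this
        exact this
    have : vv f.1 = v f := by simp [hvv, hext, hfS]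
    rw [this] at hvvf
    exact hvvf
  have hle := LinearMap.finrank_le_finrank_of_injective hinj
  have h1 : Module.finrank F ({f // f ∈ S} → F) = 2 * ε := by
    rw [Module.finrank_fintype_fun_eq_card, Fintype.card_coe, hScard]
  have h2 := W.finrank_quotient_add_finrank
  have h3 : Module.finrank F (Fin l → F) = l := by
    rw [Module.finrank_fintype_fun_eq_card, Fintype.card_fin]
  omega

/-- Strict lower bound when some subfile is missing from `X k`. -/
lemma valid_lower' {𝓕 𝓚 : Type} [Fintype 𝓕] {F : Type} [Field F] [Fintype F]
    {X : 𝓚 → Finset 𝓕} {ε : ℕ} {l : ℕ} {H : Matrix (Fin l) 𝓕 F}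
    (hH : ValidEncoder F X ε H) (k : 𝓚) (hε : 1 ≤ ε) (hcard : 2 * ε ≤ (X k).card)
    (hcov : ∀ f : 𝓕, ∃ k, f ∈ X k) {f0 : 𝓕} (hf0 : f0 ∉ X k) :
    2 * ε + 1 ≤ l := by
  classical
  have main := valid_lower hH k hcard
  suffices h : 1 ≤ Module.finrank F ↥((offSub F X k).map H.mulVecLin) by omega
  set W := (offSub F X k).map H.mulVecLin with hW
  set es : 𝓕 → F := Pi.single f0 1 with hes
  have hes_ncard : {f | es f ≠ 0}.ncard ≤ ε := by
    have hsub : {f | es f ≠ 0} ⊆ {f0} := by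
      intro f hf
      by_contra h
      have : f ≠ f0 := h
      exact hf (by simp [hes, Pi.single_eq_of_ne this])
    calc {f | es f ≠ 0}.ncard ≤ ({f0} : Set 𝓕).ncard :=
          Set.ncard_le_ncard hsub (Set.finite_singleton f0)
      _ = 1 := Set.ncard_singleton f0
      _ ≤ ε := hε
  have hcol_ne : H.mulVecLin es ≠ 0 := by
    intro hc0
    obtain ⟨k', hk'⟩ := hcov f0
    have hsyn : H.mulVec ((0 : 𝓕 → F) + es) = H.mulVec ((0 : 𝓕 → F) + (0 : 𝓕 → F)) := by
      simp only [zero_add, add_zero]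
      rw [Matrix.mulVec_zero]
      simpa [Matrix.mulVecLin_apply] using hc0
    have h0n : {f | (0 : 𝓕 → F) f ≠ 0}.ncard ≤ ε := by
      simp
    have := valid_sep hH k' hes_ncard h0n (fun f _ => rfl) hsyn f0 hk'
    simp [hes, Pi.single_eq_same] at this
  have hcol_mem : H.mulVecLin es ∈ W := by
    refine Submodule.mem_map.mpr ⟨es, ?_, rfl⟩
    intro f hf
    have : f ≠ f0 := fun h => hf0 (h ▸ hf)
    simp [hes, Pi.single_eq_of_ne this]
  by_contra hr
  have hr0 : Module.finrank F ↥W = 0 := by omega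
  have : W = ⊥ := Submodule.finrank_eq_zero.mp hr0
  rw [this] at hcol_mem
  exact hcol_ne (Submodule.mem_bot F |>.mp hcol_mem)

/-- A trivial valid encoder of length `|𝓕|` (the identity). -/
lemma exists_trivial {𝓕 𝓚 : Type} [Fintype 𝓕] (X : 𝓚 → Finset 𝓕) (ε : ℕ) :
    ∃ (F : Type) (inst1 : Field F) (inst2 : Fintype F)
      (H : Matrix (Fin (Fintype.card 𝓕)) 𝓕 F),
      @ValidEncoder 𝓕 𝓚 _ F inst1 inst2 X ε _ H := by
  classical
  set σ := Fintype.equivFin 𝓕 with hσ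
  refine ⟨ZMod 2, inferInstance, inferInstance,
    fun i f => if σ f = i then 1 else 0, ?_⟩
  intro k
  refine ⟨fun s wk f => s (σ f.1), ?_⟩
  intro w e _
  funext f
  show Matrix.mulVec _ (w + e) (σ f.1) = (w + e) f.1
  unfold Matrix.mulVec dotProduct
  rw [Finset.sum_eq_single f.1]
  · simp
  · intro b _ hb
    have : σ b ≠ σ f.1 := fun h => hb (σ.injective h)
    simp [this]
  · intro h; exact absurd (Finset.mem_univ f.1) h

/-- There is an `m × |𝓕|` matrix over some finite field all of whose `m`-subsets of
columns are linearly independent (a Vandermonde matrix over a large prime field). -/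
lemma exists_good_matrix (𝓕 : Type) [Fintype 𝓕] (m : ℕ) :
    ∃ (F : Type) (_ : Field F) (_ : Fintype F)
      (H : Matrix (Fin m) 𝓕 F),
      ∀ u : 𝓕 → F, {f | u f ≠ 0}.ncard ≤ m → H.mulVec u = 0 → u = 0 := by
  classical
  obtain ⟨p, hple, hp⟩ := Nat.exists_infinite_primes (Fintype.card 𝓕 + 1)
  haveI : Fact p.Prime := ⟨hp⟩
  have hcard : Fintype.card 𝓕 ≤ Fintype.card (ZMod p) := by
    rw [ZMod.card]; omega
  obtain ⟨α⟩ := Function.Embedding.nonempty_of_card_le hcard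
  refine ⟨ZMod p, inferInstance, inferInstance, fun i f => (α f) ^ (i : ℕ), ?_⟩
  intro u hu hu0
  set T : Finset 𝓕 := Finset.univ.filter (fun f => u f ≠ 0) with hT
  have hTset : {f | u f ≠ 0} = ↑T := by
    ext f; simp [hT]
  have hTcard : T.card ≤ m := by
    rw [hTset, Set.ncard_coe_finset] at hu; exact hu
  set n := Fintype.card {f // f ∈ T} with hn
  have hn' : n = T.card := Fintype.card_coe T
  set ι := Fintype.equivFin {f // f ∈ T} with hι
  set x : Fin n → ZMod p := fun j => α (ι.symm j).1 with hx
  have hxinj : Function.Injective x := by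
    intro a b hab
    have : (ι.symm a).1 = (ι.symm b).1 := α.injective hab
    exact ι.symm.injective (Subtype.ext this)
  set c : Fin n → ZMod p := fun j => u (ι.symm j).1 with hc
  have hc0 : c = 0 := by
    apply Matrix.eq_zero_of_forall_pow_sum_mul_pow_eq_zero hxinj
    intro i
    have hi : (i : ℕ) < m := lt_of_lt_of_le i.2 (hn' ▸ hTcard)
    have hrow := congrFun hu0 ⟨(i : ℕ), hi⟩
    unfold Matrix.mulVec dotProduct at hrow
    simp only at hrow
    have h1 : ∑ j : Fin n, c j * x j ^ (i : ℕ)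
        = ∑ t : {f // f ∈ T}, u t.1 * α t.1 ^ (i : ℕ) :=
      Equiv.sum_comp ι.symm (fun t => u t.1 * α t.1 ^ (i : ℕ))
    have h2 : ∑ t : {f // f ∈ T}, u t.1 * α t.1 ^ (i : ℕ)
        = ∑ f ∈ T, u f * α f ^ (i : ℕ) :=
      Finset.sum_coe_sort T (fun f => u f * α f ^ (i : ℕ))
    have h3 : ∑ f ∈ T, u f * α f ^ (i : ℕ) = ∑ f : 𝓕, u f * α f ^ (i : ℕ) := by
      apply Finset.sum_subset (Finset.subset_univ T)
      intro f _ hfT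
      have : u f = 0 := by by_contra h; exact hfT (by simp [hT, h])
      simp [this]
    rw [h1, h2, h3]
    simpa [mul_comm] using hrow
  funext f
  by_cases hf : u f = 0
  · exact hf
  · have hfT : f ∈ T := by simp [hT, hf]
    have := congrFun hc0 (ι ⟨f, hfT⟩)
    simp [hc] at this
    simpa using this

/-- When every cache contains every subfile, there is a valid encoder of length `2ε`. -/
lemma exists_mds_encoder {𝓕 𝓚 : Type} [Fintype 𝓕] (X : 𝓚 → Finset 𝓕) (ε : ℕ)
    (hXu : ∀ k, X k = Finset.univ) :
    ∃ (F : Type) (inst1 : Field F) (inst2 : Fintype F)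
      (H : Matrix (Fin (2 * ε)) 𝓕 F), @ValidEncoder 𝓕 𝓚 _ F inst1 inst2 X ε _ H := by
  classical
  obtain ⟨F, i1, i2, H, hgood⟩ := exists_good_matrix 𝓕 (2 * ε)
  refine ⟨F, i1, i2, H, ?_⟩
  intro k
  have hmem : ∀ f : 𝓕, f ∈ X k := fun f => by rw [hXu k]; exact Finset.mem_univ f
  set lift : ({f // f ∈ X k} → F) → (𝓕 → F) := fun wk f => wk ⟨f, hmem f⟩ with hlift
  refine ⟨fun s wk =>
    if h : ∃ e0 : 𝓕 → F, {f | e0 f ≠ 0}.ncard ≤ ε ∧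
        H.mulVec e0 = s - H.mulVec (lift wk)
    then fun f => lift wk f.1 + h.choose f.1 else fun _ => 0, ?_⟩
  intro w e he
  have hlw : lift (fun f : {f // f ∈ X k} => w f.1) = w := funext fun f => rfl
  have hcond : ∃ e0 : 𝓕 → F, {f | e0 f ≠ 0}.ncard ≤ ε ∧
      H.mulVec e0 = H.mulVec (w + e) - H.mulVec (lift (fun f : {f // f ∈ X k} => w f.1)) :=
    ⟨e, he, by rw [hlw, Matrix.mulVec_add]; ring⟩
  beta_reduce
  rw [dif_pos hcond]
  obtain ⟨h1, h2⟩ := hcond.choose_spec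
  have heq : hcond.choose = e := by
    have hker : H.mulVec (hcond.choose - e) = 0 := by
      rw [Matrix.mulVec_sub, h2, hlw, Matrix.mulVec_add]; ring
    have hwt : {f | (hcond.choose - e) f ≠ 0}.ncard ≤ 2 * ε := by
      have hsub : {f | (hcond.choose - e) f ≠ 0}
          ⊆ {f | hcond.choose f ≠ 0} ∪ {f | e f ≠ 0} := by
        intro f hf
        by_contra hn
        simp only [Set.mem_union, Set.mem_setOf_eq, not_or, not_not] at hn
        exact hf (by simp [Pi.sub_apply, hn.1, hn.2])
      calc {f | (hcond.choose - e) f ≠ 0}.ncard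
          ≤ ({f | hcond.choose f ≠ 0} ∪ {f | e f ≠ 0}).ncard :=
            Set.ncard_le_ncard hsub
        _ ≤ {f | hcond.choose f ≠ 0}.ncard + {f | e f ≠ 0}.ncard :=
            Set.ncard_union_le _ _
        _ ≤ ε + ε := add_le_add h1 he
        _ = 2 * ε := by ring
    exact sub_eq_zero.mp (hgood _ hwt hker)
  rw [heq]
  funext f
  simp [hlift]

/-- Assume `ε ≥ 1`, `𝓚` nonempty, `|X k| = Z ≥ 2ε + 1` for every `k`,
and every subfile is cached at some node. Then `ℓ*(X, ε) ≥ 2ε`, with equality iff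
`Z = F`. -/
theorem optLen_ge_two_eps {𝓕 𝓚 : Type} [Fintype 𝓕] [Nonempty 𝓚] (X : 𝓚 → Finset 𝓕)
    (ε Z : ℕ) (hε : 1 ≤ ε) (hZ : ∀ k, (X k).card = Z) (hZ2 : 2 * ε + 1 ≤ Z)
    (hcov : ∀ f : 𝓕, ∃ k, f ∈ X k) :
    2 * ε ≤ optLen X ε ∧ (optLen X ε = 2 * ε ↔ Z = Fintype.card 𝓕) := by
  classical
  obtain ⟨k0⟩ := (inferInstance : Nonempty 𝓚)
  have hne : {l : ℕ | ∃ (F : Type) (inst1 : Field F) (inst2 : Fintype F)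
      (H : Matrix (Fin l) 𝓕 F), @ValidEncoder 𝓕 𝓚 _ F inst1 inst2 X ε l H}.Nonempty :=
    ⟨Fintype.card 𝓕, exists_trivial X ε⟩
  obtain ⟨F, i1, i2, H, hH⟩ := Nat.sInf_mem hne
  have hcard0 : 2 * ε ≤ (X k0).card := by rw [hZ k0]; omega
  have hlow : 2 * ε ≤ optLen X ε := by
    have := valid_lower hH k0 hcard0
    exact le_trans (Nat.le_add_right _ _) this
  refine ⟨hlow, ?_, ?_⟩
  · intro hopt
    by_contra hzne
    have hXne : X k0 ≠ Finset.univ := by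
      intro h
      apply hzne
      rw [← hZ k0, h, Finset.card_univ]
    have hf0 : ∃ f0, f0 ∉ X k0 := by
      by_contra h
      push_neg at h
      exact hXne (Finset.eq_univ_iff_forall.mpr h)
    obtain ⟨f0, hf0⟩ := hf0
    have h2 : 2 * ε + 1 ≤ optLen X ε := valid_lower' hH k0 hε hcard0 hcov hf0
    omega
  · intro hzf
    have hXu : ∀ k, X k = Finset.univ := fun k =>
      (Finset.card_eq_iff_eq_univ _).mp (by rw [hZ k, hzf])
    have hup : optLen X ε ≤ 2 * ε := Nat.sInf_le (exists_mds_encoder X ε hXu)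
    omega
end

section
/- Assume ε ≥ 1, 𝓚 is nonempty, |X_k| = Z for every k ∈ 𝓚 with Z ≥ 2ε + 1, and every subfile index f ∈ 𝓕 belongs to X_k for at least one k ∈ 𝓚. Then (1) if Z = F − 1, the optimal codelength satisfies ℓ*(X,ε) = 2ε + 1, and (2) if Z = F − 2, then ℓ*(X,ε) = 2ε + 2. -/
open Matrix Finset

set_option linter.unusedSectionVars false
set_option linter.unusedVariables false

def KerCond {𝓕 𝓚 : Type} [Fintype 𝓕] {F : Type} [Field F]
    (X : 𝓚 → Finset 𝓕) (ε : ℕ) {l : ℕ} (H : Matrix (Fin l) 𝓕 F) : Prop :=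
  ∀ z : 𝓕 → F, H.mulVec z = 0 → ∀ k : 𝓚,
    ({f | z f ≠ 0} ∩ (X k : Set 𝓕)).ncard ≤ 2 * ε → ∀ f ∈ X k, z f = 0

section Aux
variable {𝓕 𝓚 : Type} [Fintype 𝓕] {F : Type} [Field F] [Fintype F]

theorem kerCond_unique {X : 𝓚 → Finset 𝓕} {ε l : ℕ} {H : Matrix (Fin l) 𝓕 F}
    (h : KerCond X ε H) (k : 𝓚) (w e w' e' : 𝓕 → F)
    (he : {f | e f ≠ 0}.ncard ≤ ε) (he' : {f | e' f ≠ 0}.ncard ≤ ε)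
    (hw : ∀ f ∈ X k, w f = w' f)
    (hH : H.mulVec (w + e) = H.mulVec (w' + e')) :
    ∀ f ∈ X k, (w + e) f = (w' + e') f := by
  set z := (w + e) - (w' + e') with hzdef
  have hz : H.mulVec z = 0 := by rw [hzdef, Matrix.mulVec_sub, hH, sub_self]
  have hsub : {f | z f ≠ 0} ∩ (X k : Set 𝓕) ⊆ {f | e f ≠ 0} ∪ {f | e' f ≠ 0} := by
    rintro f ⟨hf1, hf2⟩
    by_contra hcon
    simp only [Set.mem_union, Set.mem_setOf_eq, not_or, not_not] at hcon
    apply hf1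
    have hzf : z f = w f + e f - (w' f + e' f) := rfl
    rw [hzf, hcon.1, hcon.2, hw f hf2]
    ring
  have hcard : ({f | z f ≠ 0} ∩ (X k : Set 𝓕)).ncard ≤ 2 * ε := by
    calc ({f | z f ≠ 0} ∩ (X k : Set 𝓕)).ncard
        ≤ ({f | e f ≠ 0} ∪ {f | e' f ≠ 0}).ncard :=
          Set.ncard_le_ncard hsub (Set.toFinite _)
      _ ≤ {f | e f ≠ 0}.ncard + {f | e' f ≠ 0}.ncard := Set.ncard_union_le _ _
      _ ≤ 2 * ε := by omega
  intro f hf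
  have := h z hz k hcard f hf
  exact sub_eq_zero.mp this

theorem valid_of_kerCond {X : 𝓚 → Finset 𝓕} {ε l : ℕ} {H : Matrix (Fin l) 𝓕 F}
    (h : KerCond X ε H) : ValidEncoder F X ε H := by
  intro k
  classical
  refine ⟨fun y s => if hy : ∃ we : (𝓕 → F) × (𝓕 → F),
      {f | we.2 f ≠ 0}.ncard ≤ ε ∧ H.mulVec (we.1 + we.2) = y ∧
      ∀ f : {f // f ∈ X k}, we.1 f.1 = s f
    then fun f => (hy.choose.1 + hy.choose.2) f.1 else fun _ => 0, ?_⟩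
  intro w e he
  have hy : ∃ we : (𝓕 → F) × (𝓕 → F),
      {f | we.2 f ≠ 0}.ncard ≤ ε ∧ H.mulVec (we.1 + we.2) = H.mulVec (w + e) ∧
      ∀ f : {f // f ∈ X k}, we.1 f.1 = (fun f : {f // f ∈ X k} => w f.1) f :=
    ⟨(w, e), he, rfl, fun f => rfl⟩
  beta_reduce
  rw [dif_pos hy]
  obtain ⟨he', hH, hw⟩ := hy.choose_spec
  funext f
  exact kerCond_unique h k hy.choose.1 hy.choose.2 w e he' he
    (fun g hg => hw ⟨g, hg⟩) hH f f.2

theorem kerCond_of_valid {X : 𝓚 → Finset 𝓕} {ε l : ℕ} {H : Matrix (Fin l) 𝓕 F}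
    (h : ValidEncoder F X ε H) : KerCond X ε H := by
  classical
  intro z hz k hcard f₀ hf₀
  obtain ⟨D, hD⟩ := h k
  obtain ⟨T, hT⟩ : ∃ T : Finset 𝓕, T = (X k).filter (fun f => z f ≠ 0) := ⟨_, rfl⟩
  have hTX : T ⊆ X k := hT ▸ Finset.filter_subset _ _
  have hTcard : T.card ≤ 2 * ε := by
    have hset : ((T : Set 𝓕)) = {f | z f ≠ 0} ∩ (X k : Set 𝓕) := by
      rw [hT]; ext f; simp [and_comm]
    calc T.card = ((T : Set 𝓕)).ncard := (Set.ncard_coe_finset T).symm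
      _ ≤ 2 * ε := by rw [hset]; exact hcard
  obtain ⟨T₁, hT₁sub, hT₁card⟩ := T.exists_subset_card_eq (min_le_right ε T.card)
  obtain ⟨T₂, hT₂⟩ : ∃ T₂ : Finset 𝓕, T₂ = T \ T₁ := ⟨_, rfl⟩
  have hT₂card : T₂.card ≤ ε := by
    have hd : T₂.card = T.card - T₁.card := by rw [hT₂]; exact Finset.card_sdiff_of_subset hT₁sub
    rcases Nat.le_total ε T.card with hle | hle
    · have h1 : T₁.card = ε := by rw [hT₁card, min_eq_left hle]
      omega
    · have h1 : T₁.card = T.card := by rw [hT₁card, min_eq_right hle]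
      omega
  set e₁ : 𝓕 → F := fun f => if f ∈ T₁ then z f else 0 with he₁def
  set w₂ : 𝓕 → F := fun f => if f ∈ X k then 0 else -z f with hw₂def
  set e₂ : 𝓕 → F := fun f => if f ∈ T₂ then -z f else 0 with he₂def
  have he₁ : {f | e₁ f ≠ 0}.ncard ≤ ε := by
    have hsub : {f | e₁ f ≠ 0} ⊆ (T₁ : Set 𝓕) := by
      intro f hf
      simp only [Set.mem_setOf_eq, he₁def] at hf
      by_cases hm : f ∈ T₁
      · exact Finset.mem_coe.mpr hm
      · simp [hm] at hf
    calc {f | e₁ f ≠ 0}.ncard ≤ ((T₁ : Set 𝓕)).ncard :=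
          Set.ncard_le_ncard hsub (Set.toFinite _)
      _ = T₁.card := Set.ncard_coe_finset T₁
      _ ≤ ε := by omega
  have he₂ : {f | e₂ f ≠ 0}.ncard ≤ ε := by
    have hsub : {f | e₂ f ≠ 0} ⊆ (T₂ : Set 𝓕) := by
      intro f hf
      simp only [Set.mem_setOf_eq, he₂def] at hf
      by_cases hm : f ∈ T₂
      · exact Finset.mem_coe.mpr hm
      · simp [hm] at hf
    calc {f | e₂ f ≠ 0}.ncard ≤ ((T₂ : Set 𝓕)).ncard :=
          Set.ncard_le_ncard hsub (Set.toFinite _)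
      _ = T₂.card := Set.ncard_coe_finset T₂
      _ ≤ ε := hT₂card
  have hsum : w₂ + e₂ = (0 : 𝓕 → F) + e₁ - z := by
    funext f
    have : w₂ f + e₂ f = 0 + e₁ f - z f := by
      by_cases hfX : f ∈ X k
      · by_cases hf1 : f ∈ T₁
        · have hf2 : f ∉ T₂ := by simp [hT₂, hf1]
          simp [hw₂def, he₁def, he₂def, hfX, hf1, hf2]
        · by_cases hf2 : f ∈ T₂
          · simp [hw₂def, he₁def, he₂def, hfX, hf1, hf2]
          · have hfT : f ∉ T := fun hfT => hf2 (hT₂ ▸ Finset.mem_sdiff.mpr ⟨hfT, hf1⟩)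
            have hzf : z f = 0 := by
              by_contra hc
              exact hfT (hT ▸ Finset.mem_filter.mpr ⟨hfX, hc⟩)
            simp [hw₂def, he₁def, he₂def, hfX, hf1, hf2, hzf]
      · have hf1 : f ∉ T₁ := fun hc => hfX (hTX (hT₁sub hc))
        have hf2 : f ∉ T₂ := fun hc => hfX (hTX (Finset.mem_sdiff.mp (hT₂ ▸ hc)).1)
        simp [hw₂def, he₁def, he₂def, hfX, hf1, hf2]
    simpa using this
  have h1 := hD 0 e₁ he₁
  have h2 := hD w₂ e₂ he₂
  have hw₂eq : (fun f : {f // f ∈ X k} => w₂ f.1) = (fun f : {f // f ∈ X k} => (0 : 𝓕 → F) f.1) := by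
    funext f
    simp [hw₂def, f.2]
  have hHeq : H.mulVec (w₂ + e₂) = H.mulVec ((0 : 𝓕 → F) + e₁) := by
    rw [hsum, Matrix.mulVec_sub, hz, sub_zero]
  rw [hw₂eq, hHeq, h1] at h2
  have := congrFun h2 ⟨f₀, hf₀⟩
  have hsumf := congrFun hsum f₀
  simp only [Pi.add_apply, Pi.sub_apply, Pi.zero_apply] at this hsumf
  -- this : 0 + e₁ f₀ = w₂ f₀ + e₂ f₀ ; hsumf : w₂ f₀ + e₂ f₀ = 0 + e₁ f₀ - z f₀
  rw [this] at hsumf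
  exact sub_eq_self.mp hsumf.symm

theorem lower_bound [Nonempty 𝓚] {X : 𝓚 → Finset 𝓕} {ε l : ℕ} {H : Matrix (Fin l) 𝓕 F}
    (hε : 1 ≤ ε) {Z : ℕ} (hZ : ∀ k, (X k).card = Z)
    (hZ2 : 2 * ε + 1 ≤ Z) (hM : Fintype.card 𝓕 ≤ Z + 2 * ε)
    (hZF : Z ≤ Fintype.card 𝓕)
    (hcov : ∀ f : 𝓕, ∃ k, f ∈ X k)
    (hker : KerCond X ε H) : 2 * ε + (Fintype.card 𝓕 - Z) ≤ l := by
  classical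
  by_contra hl
  push_neg at hl
  obtain ⟨k⟩ := ‹Nonempty 𝓚›
  obtain ⟨S₀, hS₀sub, hS₀card⟩ := (X k).exists_subset_card_eq
    (show 2 * ε ≤ (X k).card by rw [hZ k]; omega)
  set M : Finset 𝓕 := (X k)ᶜ with hMdef
  have hMcard : M.card = Fintype.card 𝓕 - Z := by rw [hMdef, Finset.card_compl, hZ k]
  have hdisj : Disjoint S₀ M :=
    Disjoint.mono_left hS₀sub disjoint_compl_right
  set S : Finset 𝓕 := S₀ ∪ M with hSdef
  have hScard : S.card = 2 * ε + (Fintype.card 𝓕 - Z) := by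
    rw [hSdef, Finset.card_union_of_disjoint hdisj, hS₀card, hMcard]
  -- the columns indexed by S are linearly dependent
  have hnli : ¬ LinearIndependent F (fun s : {x // x ∈ S} => fun i => H i s.1) := by
    intro hli
    have := hli.fintype_card_le_finrank
    rw [Module.finrank_fintype_fun_eq_card, Fintype.card_coe, Fintype.card_fin] at this
    omega
  obtain ⟨g, hgsum, s₀, hgs₀⟩ := Fintype.not_linearIndependent_iff.mp hnli
  set z : 𝓕 → F := fun f => if h : f ∈ S then g ⟨f, h⟩ else 0 with hzdef
  have hzS : ∀ f, z f ≠ 0 → f ∈ S := by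
    intro f hf
    by_contra hc
    exact hf (by rw [hzdef]; simp [hc])
  have hz : H.mulVec z = 0 := by
    funext i
    have h0 := congrFun hgsum i
    simp only [Finset.sum_apply, Pi.smul_apply, smul_eq_mul, Pi.zero_apply] at h0
    show ∑ f, H i f * z f = 0
    rw [← Finset.sum_subset (Finset.subset_univ S)
      (fun x _ hx => by rw [hzdef]; simp [hx])]
    rw [← Finset.sum_coe_sort S (fun f => H i f * z f)]
    rw [← h0]
    refine Finset.sum_congr rfl fun s _ => ?_
    rw [hzdef]
    simp [s.2, mul_comm]
  -- z vanishes on X k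
  have hzXk : ∀ f ∈ X k, z f = 0 := by
    refine hker z hz k ?_
    have hsub : {f | z f ≠ 0} ∩ (X k : Set 𝓕) ⊆ (S₀ : Set 𝓕) := by
      rintro f ⟨hf1, hf2⟩
      have hfS := hzS f hf1
      rw [hSdef] at hfS
      rcases Finset.mem_union.mp hfS with h | h
      · exact h
      · exact absurd hf2 (by rw [hMdef] at h; simpa using Finset.mem_compl.mp h)
    calc ({f | z f ≠ 0} ∩ (X k : Set 𝓕)).ncard ≤ ((S₀ : Set 𝓕)).ncard :=
          Set.ncard_le_ncard hsub (Set.toFinite _)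
      _ = S₀.card := Set.ncard_coe_finset _
      _ ≤ 2 * ε := by omega
  -- hence z is supported on M, a small set
  have hzM : {f | z f ≠ 0} ⊆ (M : Set 𝓕) := by
    intro f hf
    have hfS := hzS f hf
    rw [hSdef] at hfS
    rcases Finset.mem_union.mp hfS with h | h
    · exact absurd (hzXk f (hS₀sub h)) hf
    · exact h
  have hzs₀ : z s₀.1 ≠ 0 := by
    rw [hzdef]
    simpa [s₀.2] using hgs₀
  obtain ⟨k', hk'⟩ := hcov s₀.1
  have hsmall : ({f | z f ≠ 0} ∩ (X k' : Set 𝓕)).ncard ≤ 2 * ε := by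
    calc ({f | z f ≠ 0} ∩ (X k' : Set 𝓕)).ncard ≤ ((M : Set 𝓕)).ncard :=
          Set.ncard_le_ncard (fun f hf => hzM hf.1) (Set.toFinite _)
      _ = M.card := Set.ncard_coe_finset _
      _ ≤ 2 * ε := by omega
  exact hzs₀ (hker z hz k' hsmall s₀.1 hk')

end Aux

theorem vandermonde_ker {𝓕 : Type} [Fintype 𝓕] {K : Type} [Field K] [DecidableEq 𝓕]
    {l : ℕ} (x : 𝓕 → K) (hx : Function.Injective x) (z : 𝓕 → K)
    (hz : (Matrix.of fun (i : Fin l) f => x f ^ (i : ℕ)).mulVec z = 0)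
    (hcard : {f | z f ≠ 0}.ncard ≤ l) : z = 0 := by
  classical
  have hall : ∀ f₀, z f₀ = 0 := ?_
  · funext f₀; exact hall f₀
  intro f₀
  by_contra hf₀z
  set s : Finset 𝓕 := Finset.univ.filter (fun f => z f ≠ 0) with hs
  have hscard : s.card ≤ l := by
    have : ((s : Set 𝓕)) = {f | z f ≠ 0} := by ext f; simp [hs]
    calc s.card = ((s : Set 𝓕)).ncard := (Set.ncard_coe_finset s).symm
      _ ≤ l := by rw [this]; exact hcard
  have hf₀s : f₀ ∈ s := by simp [hs, hf₀z]
  have hinj : Set.InjOn x ↑s := hx.injOn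
  have hdeg : (Lagrange.basis s x f₀).natDegree < l := by
    rw [Lagrange.natDegree_basis hinj hf₀s]
    have h1 : 1 ≤ s.card := Finset.card_pos.mpr ⟨f₀, hf₀s⟩
    omega
  set Q := Lagrange.basis s x f₀ with hQ
  have key : ∑ f, z f * Q.eval (x f) = 0 := by
    calc ∑ f, z f * Q.eval (x f)
        = ∑ f, ∑ i ∈ range l, z f * (Q.coeff i * x f ^ i) := by
          refine Finset.sum_congr rfl fun f _ => ?_
          rw [Polynomial.eval_eq_sum_range' hdeg, Finset.mul_sum]
      _ = ∑ i ∈ range l, ∑ f, z f * (Q.coeff i * x f ^ i) := Finset.sum_comm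
      _ = ∑ i ∈ range l, Q.coeff i * ∑ f, x f ^ i * z f := by
          refine Finset.sum_congr rfl fun i _ => ?_
          rw [Finset.mul_sum]
          exact Finset.sum_congr rfl fun f _ => by ring
      _ = 0 := by
          refine Finset.sum_eq_zero fun i hi => ?_
          have h0 := congrFun hz ⟨i, Finset.mem_range.mp hi⟩
          simp only [Matrix.mulVec, dotProduct, Matrix.of_apply, Pi.zero_apply] at h0
          rw [show (∑ f, x f ^ i * z f) = 0 from h0, mul_zero]
  have key2 : ∑ f, z f * Q.eval (x f) = z f₀ := by
    rw [← Finset.sum_subset (Finset.subset_univ s)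
      (fun f _ hf => by
        have : z f = 0 := by
          by_contra hc
          exact hf (by simp [hs, hc])
        rw [this, zero_mul])]
    rw [Finset.sum_eq_single f₀
      (fun f hf hne => by
        rw [hQ, Lagrange.eval_basis_of_ne (Ne.symm hne) hf, mul_zero])
      (fun h => absurd hf₀s h)]
    rw [hQ, Lagrange.eval_basis_self hinj hf₀s, mul_one]
  rw [key] at key2
  exact hf₀z key2.symm


/-- Assume `ε ≥ 1`, `𝓚` nonempty, `|X k| = Z ≥ 2ε + 1` for every `k`,
and every subfile is cached at some node. Then (1) if `Z = F − 1` then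
`ℓ*(X, ε) = 2ε + 1`, and (2) if `Z = F − 2` then `ℓ*(X, ε) = 2ε + 2`. -/
theorem optLen_near_two_eps {𝓕 𝓚 : Type} [Fintype 𝓕] [Nonempty 𝓚] (X : 𝓚 → Finset 𝓕)
    (ε Z : ℕ) (hε : 1 ≤ ε) (hZ : ∀ k, (X k).card = Z) (hZ2 : 2 * ε + 1 ≤ Z)
    (hcov : ∀ f : 𝓕, ∃ k, f ∈ X k) :
    (Z + 1 = Fintype.card 𝓕 → optLen X ε = 2 * ε + 1) ∧
      (Z + 2 = Fintype.card 𝓕 → optLen X ε = 2 * ε + 2) := by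
  classical
  have main : ∀ d : ℕ, 1 ≤ d → d ≤ 2 → Z + d = Fintype.card 𝓕 →
      optLen X ε = 2 * ε + d := by
    intro d hd1 hd2 hdF
    have hZF : Z ≤ Fintype.card 𝓕 := by omega
    have hM : Fintype.card 𝓕 ≤ Z + 2 * ε := by omega
    have hmem : (2 * ε + d) ∈ {l : ℕ | ∃ (F : Type) (inst1 : Field F) (inst2 : Fintype F)
        (H : Matrix (Fin l) 𝓕 F), @ValidEncoder 𝓕 𝓚 _ F inst1 inst2 X ε l H} := by
      obtain ⟨p, hp1, hp2⟩ := Nat.exists_infinite_primes (Fintype.card 𝓕)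
      haveI : Fact p.Prime := ⟨hp2⟩
      obtain ⟨x⟩ : Nonempty (𝓕 ↪ ZMod p) :=
        Function.Embedding.nonempty_iff_card_le.mpr (by rw [ZMod.card]; exact hp1)
      refine ⟨ZMod p, inferInstance, inferInstance,
        Matrix.of fun (i : Fin (2 * ε + d)) f => x f ^ (i : ℕ), ?_⟩
      apply valid_of_kerCond
      intro z hz k hcard f hf
      have hsplit : {f | z f ≠ 0} ⊆
          ({f | z f ≠ 0} ∩ (X k : Set 𝓕)) ∪ ((((X k)ᶜ : Finset 𝓕) : Set 𝓕)) := by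
        intro g hg
        by_cases hgk : g ∈ X k
        · exact Or.inl ⟨hg, hgk⟩
        · exact Or.inr (by simpa using hgk)
      have hsupp : {f | z f ≠ 0}.ncard ≤ 2 * ε + d := by
        calc {f | z f ≠ 0}.ncard
            ≤ (({f | z f ≠ 0} ∩ (X k : Set 𝓕)) ∪ ((((X k)ᶜ : Finset 𝓕) : Set 𝓕))).ncard :=
              Set.ncard_le_ncard hsplit (Set.toFinite _)
          _ ≤ ({f | z f ≠ 0} ∩ (X k : Set 𝓕)).ncard + ((((X k)ᶜ : Finset 𝓕) : Set 𝓕)).ncard :=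
              Set.ncard_union_le _ _
          _ ≤ 2 * ε + d := by
              have h1 : ((((X k)ᶜ : Finset 𝓕) : Set 𝓕)).ncard = ((X k)ᶜ : Finset 𝓕).card :=
                Set.ncard_coe_finset _
              have h2 : ((X k)ᶜ : Finset 𝓕).card = Fintype.card 𝓕 - Z := by
                rw [Finset.card_compl, hZ k]
              omega
      have hz0 := vandermonde_ker x x.injective z hz hsupp
      exact congrFun hz0 f
    have hbound : ∀ m ∈ {l : ℕ | ∃ (F : Type) (inst1 : Field F) (inst2 : Fintype F)
        (H : Matrix (Fin l) 𝓕 F), @ValidEncoder 𝓕 𝓚 _ F inst1 inst2 X ε l H},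
        2 * ε + d ≤ m := by
      rintro m ⟨K, i1, i2, H, hH⟩
      have hlb := lower_bound hε hZ hZ2 hM hZF hcov (kerCond_of_valid hH)
      omega
    exact le_antisymm (Nat.sInf_le hmem) (le_csInf ⟨_, hmem⟩ hbound)
  exact ⟨main 1 (by norm_num) (by norm_num), main 2 (by norm_num) (by norm_num)⟩
end
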